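/- arXiv:2212.12792 — 5 statements merged into one kernel-verified Lean document; each statement's English description precedes it below -/
import Mathlib

section
/- Let K : ℝ → ℝ³ be an injective map that is differentiable at a point x ∈ ℝ with derivative vector K'(x) ≠ 0, and let a < b be real numbers. Then, as r → 0 from the right, the normalized secant vector unit(K(x + r·b) − K(x + r·a)) tends to the unit tangent vector unit(K'(x)). (This is the smooth extension of the Gauss map h₁₃ to the hidden and anomalous boundary faces of the compactified configuration space, where configuration points collide on the knot; it is the key computation showing the pushforward of the localized form vanishes on those faces whenever the unit tangent avoids the support of the bump form.) -/
open Filter Topology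

noncomputable section

abbrev R3 := EuclideanSpace ℝ (Fin 3)

/-- Normalization of a vector, with the convention `unit 0 = 0`. -/
def unit (v : R3) : R3 := ‖v‖⁻¹ • v

lemma unit_smul_pos (c : ℝ) (hc : 0 < c) (v : R3) : unit (c • v) = unit v := by
  unfold unit
  rw [norm_smul, smul_smul, Real.norm_eq_abs, abs_of_pos hc, mul_inv]
  rcases eq_or_ne v 0 with rfl | hv
  · simp
  · congr 1
    rw [mul_comm c⁻¹, mul_assoc, inv_mul_cancel₀ hc.ne', mul_one]

lemma slope_aux (K : ℝ → R3) (x : ℝ) (K' : R3) (hd : HasDerivAt K K' x) (c : ℝ) :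
    Tendsto (fun r : ℝ => r⁻¹ • (K (x + r * c) - K x)) (𝓝[≠] 0) (𝓝 (c • K')) := by
  have hg : HasDerivAt (fun r : ℝ => K (x + r * c)) (c • K') 0 := by
    have h1 : HasDerivAt (fun r : ℝ => x + r * c) c 0 :=
      by simpa using ((hasDerivAt_id (0:ℝ)).mul_const c).const_add x
    have hd' : HasDerivAt K K' ((fun r : ℝ => x + r * c) 0) := by simpa using hd
    exact hd'.scomp 0 h1
  have := hasDerivAt_iff_tendsto_slope.mp hg
  refine this.congr fun r => ?_
  simp [slope_def_module]

/-- The smooth extension of the Gauss map to hidden and anomalous faces: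
for an injective `K` differentiable at `x` with nonzero derivative, the normalized
secant `unit (K (x + r*b) - K (x + r*a))` (with `a < b`) tends to the unit tangent
`unit K'` as `r → 0⁺`. -/
theorem secant_tendsto_unit_tangent (K : ℝ → R3) (hK : Function.Injective K)
    (x : ℝ) (K' : R3) (hd : HasDerivAt K K' x) (hK' : K' ≠ 0)
    (a b : ℝ) (hab : a < b) :
    Tendsto (fun r : ℝ => unit (K (x + r * b) - K (x + r * a))) (𝓝[>] 0)
      (𝓝 (unit K')) := by
  have hle : 𝓝[>] (0:ℝ) ≤ 𝓝[≠] (0:ℝ) :=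
    nhdsWithin_mono _ fun y hy => ne_of_gt hy
  have htend : Tendsto (fun r : ℝ => r⁻¹ • (K (x + r * b) - K (x + r * a))) (𝓝[>] 0)
      (𝓝 ((b - a) • K')) := by
    have h := ((slope_aux K x K' hd b).sub (slope_aux K x K' hd a)).mono_left hle
    have : (b - a) • K' = b • K' - a • K' := by rw [sub_smul]
    rw [this]
    refine h.congr fun r => ?_
    simp [smul_sub]
  have hne : (b - a) • K' ≠ 0 := smul_ne_zero (by linarith) hK'
  have hcont : ContinuousAt unit ((b - a) • K') := by
    have : ContinuousAt (fun v : R3 => ‖v‖⁻¹ • v) ((b - a) • K') := by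
      exact ((continuous_norm.continuousAt).inv₀ (norm_ne_zero_iff.mpr hne)).smul
        continuousAt_id
    exact this
  have := (hcont.tendsto.comp htend)
  have hfinal : unit ((b - a) • K') = unit K' := unit_smul_pos _ (by linarith) _
  rw [hfinal] at this
  refine this.congr' ?_
  filter_upwards [self_mem_nhdsWithin] with r (hr : 0 < r)
  show unit (r⁻¹ • _) = _
  rw [unit_smul_pos _ (inv_pos.mpr hr)]

end
end

section
/- Let N ∈ ℝ³ with ‖N‖ = 1, let c, ξ ∈ ℝ³ and u ∈ ℝ with ξ ≠ 0 and u • c ≠ ξ, and let ε ≥ 0. If ‖unit ξ − N‖ ≤ ε and ‖unit(u • c − ξ) − N‖ ≤ ε, then |u| · ‖c ×₃ N‖ ≤ ε · (‖ξ‖ + ‖u • c − ξ‖). (This quantitative estimate shows that on the hidden and anomalous faces of Cnf[𝒦,ℝ³;3,1] indexed by {i, j, 4}, the collision parameter u along the knot is forced to be of order ε whenever both Gauss directions lie in the ε-disk around N and the tangent direction c is not parallel to N.) -/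
open Filter Topology

noncomputable section

/-- The cross product on `ℝ³ = EuclideanSpace ℝ (Fin 3)`. -/
def cross3 (v w : R3) : R3 :=
  (WithLp.equiv 2 (Fin 3 → ℝ)).symm
    (crossProduct ((WithLp.equiv 2 (Fin 3 → ℝ)) v) ((WithLp.equiv 2 (Fin 3 → ℝ)) w))

infixl:74 " ×₃ " => cross3

lemma cross3_norm_le (v w : R3) : ‖v ×₃ w‖ ≤ ‖v‖ * ‖w‖ := by
  rw [EuclideanSpace.norm_eq, EuclideanSpace.norm_eq, EuclideanSpace.norm_eq,
    ← Real.sqrt_mul (by positivity)]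
  apply Real.sqrt_le_sqrt
  simp only [cross3, WithLp.equiv_symm_apply, WithLp.ofLp_toLp, cross_apply, Fin.sum_univ_three,
    WithLp.equiv_apply, Matrix.cons_val_zero, Matrix.cons_val_one, Matrix.head_cons,
    Matrix.cons_val_two, Matrix.tail_cons]
  simp only [Real.norm_eq_abs, sq_abs]
  nlinarith [sq_nonneg (v 0 * w 0 + v 1 * w 1 + v 2 * w 2), sq_nonneg (v 0), sq_nonneg (v 1),
    sq_nonneg (v 2), sq_nonneg (w 0), sq_nonneg (w 1), sq_nonneg (w 2)]

lemma cross3_sub_smul (v w : R3) (r : ℝ) : (v - r • w) ×₃ w = v ×₃ w := by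
  simp only [cross3]
  ext i
  fin_cases i <;> simp [cross_apply] <;> ring

lemma cross3_smul (r : ℝ) (v w : R3) : (r • v) ×₃ w = r • (v ×₃ w) := by
  simp only [cross3]
  ext i
  fin_cases i <;> simp [cross_apply] <;> ring

lemma cross3_add (a b w : R3) : (a + b) ×₃ w = a ×₃ w + b ×₃ w := by
  simp only [cross3]
  ext i
  fin_cases i <;> simp [cross_apply] <;> ring

/-- Quantitative estimate on the hidden and anomalous faces of `Cnf[𝒦,ℝ³;3,1]`:
if both Gauss directions lie in the `ε`-disk around `N`, the collision parameter
`u` along the knot satisfies `|u| * ‖c ×₃ N‖ ≤ ε * (‖ξ‖ + ‖u • c - ξ‖)`. -/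
theorem collision_parameter_estimate (N c ξ : R3) (u : ℝ) (ε : ℝ)
    (hN : ‖N‖ = 1) (hξ : ξ ≠ 0) (h : u • c ≠ ξ) (hε : 0 ≤ ε)
    (h1 : ‖unit ξ - N‖ ≤ ε) (h2 : ‖unit (u • c - ξ) - N‖ ≤ ε) :
    |u| * ‖c ×₃ N‖ ≤ ε * (‖ξ‖ + ‖u • c - ξ‖) := by
  have key : ∀ v : R3, v ≠ 0 → ‖unit v - N‖ ≤ ε → ‖v ×₃ N‖ ≤ ε * ‖v‖ := by
    intro v hv hvu
    have h0 : ‖v‖ ≠ 0 := norm_ne_zero_iff.2 hv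
    have e1 : v - ‖v‖ • N = ‖v‖ • (unit v - N) := by
      rw [smul_sub, unit, smul_smul, mul_inv_cancel₀ h0, one_smul]
    calc ‖v ×₃ N‖ = ‖(v - ‖v‖ • N) ×₃ N‖ := by rw [cross3_sub_smul]
      _ ≤ ‖v - ‖v‖ • N‖ * ‖N‖ := cross3_norm_le _ _
      _ = ‖v‖ * ‖unit v - N‖ := by rw [hN, mul_one, e1, norm_smul, Real.norm_eq_abs,
          abs_of_nonneg (norm_nonneg v)]
      _ ≤ ‖v‖ * ε := by gcongr
      _ = ε * ‖v‖ := mul_comm _ _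
  have hd : u • c - ξ ≠ 0 := sub_ne_zero.2 h
  have e2 : u • (c ×₃ N) = (u • c - ξ) ×₃ N + ξ ×₃ N := by
    rw [← cross3_smul, ← cross3_add, sub_add_cancel]
  calc |u| * ‖c ×₃ N‖ = ‖u • (c ×₃ N)‖ := by rw [norm_smul, Real.norm_eq_abs]
    _ = ‖(u • c - ξ) ×₃ N + ξ ×₃ N‖ := by rw [e2]
    _ ≤ ‖(u • c - ξ) ×₃ N‖ + ‖ξ ×₃ N‖ := norm_add_le _ _
    _ ≤ ε * ‖u • c - ξ‖ + ε * ‖ξ‖ := add_le_add (key _ hd h2) (key _ hξ h1)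
    _ = ε * (‖ξ‖ + ‖u • c - ξ‖) := by ring

end
end

section
/- Let K : ℝ → ℝ³ be differentiable at x ∈ ℝ with derivative vector K'(x), let u ∈ ℝ and ξ ∈ ℝ³, and assume u • K'(x) ≠ ξ. Then, as r → 0 from the right, unit(K(x + r·u) − (K(x) + r • ξ)) tends to unit(u • K'(x) − ξ). (This computes the smooth extension of the Gauss map between a point on the knot and the off-knot point on the hidden faces of Cnf[𝒦,ℝ³;3,1] where a point on the knot and the off-knot point collide simultaneously, with relative collision directions u along the knot and ξ in space.) -/
open Filter Topology

noncomputable section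

lemma unit_continuousAt {v : R3} (hv : v ≠ 0) : ContinuousAt unit v := by
  have : ContinuousAt (fun w : R3 => ‖w‖⁻¹ • w) v := by
    refine ContinuousAt.smul (f := fun w : R3 => ‖w‖⁻¹) (g := fun w : R3 => w) ?_ ?_
    · exact (continuous_norm.continuousAt).inv₀ (norm_ne_zero_iff.mpr hv)
    · exact continuousAt_id
  exact this

lemma unit_pos_smul {c : ℝ} (hc : 0 < c) (v : R3) : unit (c • v) = unit v := by
  unfold unit
  rcases eq_or_ne v 0 with rfl | hv
  · simp
  · rw [norm_smul, smul_smul]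
    congr 1
    rw [Real.norm_of_nonneg hc.le]
    rw [mul_inv, mul_comm, ← mul_assoc, mul_inv_cancel₀ (ne_of_gt hc), one_mul]

/-- The smooth extension of the Gauss map between a point on the knot and the
off-knot point on the hidden faces of `Cnf[𝒦,ℝ³;3,1]`: with relative collision
directions `u` along the knot and `ξ` in space,
`unit (K (x + r*u) - (K x + r • ξ))` tends to `unit (u • K' - ξ)` as `r → 0⁺`. -/
theorem gauss_knot_offknot_collision (K : ℝ → R3) (x : ℝ) (K' : R3)
    (hd : HasDerivAt K K' x) (u : ℝ) (ξ : R3) (h : u • K' ≠ ξ) :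
    Tendsto (fun r : ℝ => unit (K (x + r * u) - (K x + r • ξ))) (𝓝[>] 0)
      (𝓝 (unit (u • K' - ξ))) := by
  -- the composed function t ↦ K (x + t*u) has derivative u • K' at 0
  have hinner : HasDerivAt (fun t : ℝ => x + t * u) u 0 := by
    simpa using ((hasDerivAt_id (0:ℝ)).mul_const u).const_add x
  have hcomp : HasDerivAt (fun t : ℝ => K (x + t * u)) (u • K') 0 := by
    have := HasDerivAt.scomp (x := (0:ℝ)) (show HasDerivAt K K' (x + 0 * u) by
      simpa using hd) hinner
    exact this
  have hslope : Tendsto (fun r : ℝ => r⁻¹ • (K (x + r * u) - K x)) (𝓝[>] 0)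
      (𝓝 (u • K')) := by
    have := hasDerivAt_iff_tendsto_slope.mp hcomp
    have h2 := this.mono_left (nhdsWithin_mono 0 (fun r hr => by
      simpa using ne_of_gt (hr : (0:ℝ) < r)))
    refine h2.congr fun r => ?_
    simp [slope_def_module]
  have hf : Tendsto (fun r : ℝ => r⁻¹ • (K (x + r * u) - (K x + r • ξ))) (𝓝[>] 0)
      (𝓝 (u • K' - ξ)) := by
    have hξ : Tendsto (fun r : ℝ => r⁻¹ • (r • ξ)) (𝓝[>] 0) (𝓝 ξ) := by
      apply tendsto_const_nhds.congr'
      filter_upwards [self_mem_nhdsWithin] with r hr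
      rw [smul_smul, inv_mul_cancel₀ (ne_of_gt hr), one_smul]
    have := hslope.sub hξ
    refine this.congr fun r => ?_
    simp [smul_sub, sub_add_eq_sub_sub]
  have hne : u • K' - ξ ≠ 0 := sub_ne_zero.mpr h
  have := (unit_continuousAt hne).tendsto.comp hf
  refine this.congr' ?_
  filter_upwards [self_mem_nhdsWithin] with r hr
  have : unit (r⁻¹ • (K (x + r * u) - (K x + r • ξ)))
      = unit (K (x + r * u) - (K x + r • ξ)) :=
    unit_pos_smul (inv_pos.mpr hr) _
  simpa [Function.comp] using this

end
end

section
/- Let n ≥ 1 and let b : Fin n → ℕ be an injective function whose last value is strictly minimal, i.e. b (n−1) < b i for every i ≠ n−1. Then: (1) the number of triples (i, j, k) with i < j < k in Fin n such that b j < b i and b j < b k is at most binomial(n−1, 3); and (2) the number of quadruples (i, j, k, l) with i < j < k < l in Fin n such that b k < b i and b j < b l is at most binomial(n−1, 4). (These are the counts of triple-crossing and chord-pair subdiagram contributions in the multiple-crossing Gauss diagram of a pedal (petal) projection: since the last endpoint carries the minimal level, no eligible triple or quadruple can use the last position, which yields the übercrossing number lower bound for the Casson invariant.) -/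
/-- Counts of triple-crossing and chord-pair subdiagram contributions in the
multiple-crossing Gauss diagram of a pedal projection: if the level function
`b : Fin n → ℕ` is injective and its last value is strictly minimal, then the
number of eligible triples `i < j < k` with `b j < b i` and `b j < b k` is at
most `(n-1).choose 3`, and the number of eligible quadruples `i < j < k < l`
with `b k < b i` and `b j < b l` is at most `(n-1).choose 4`. -/
theorem pedal_subdiagram_counts (n : ℕ) (hn : 1 ≤ n) (b : Fin n → ℕ)
    (hb : Function.Injective b)
    (hmin : ∀ i : Fin n, i ≠ ⟨n - 1, by omega⟩ → b ⟨n - 1, by omega⟩ < b i) :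
    (Finset.univ.filter (fun x : Fin n × Fin n × Fin n =>
        x.1 < x.2.1 ∧ x.2.1 < x.2.2 ∧ b x.2.1 < b x.1 ∧ b x.2.1 < b x.2.2)).card
      ≤ (n - 1).choose 3 ∧
    (Finset.univ.filter (fun x : Fin n × Fin n × Fin n × Fin n =>
        x.1 < x.2.1 ∧ x.2.1 < x.2.2.1 ∧ x.2.2.1 < x.2.2.2 ∧
          b x.2.2.1 < b x.1 ∧ b x.2.1 < b x.2.2.2)).card
      ≤ (n - 1).choose 4 := by
  set L : Fin n := ⟨n - 1, by omega⟩ with hL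
  have hcard : (Finset.univ.erase L).card = n - 1 := by
    rw [Finset.card_erase_of_mem (Finset.mem_univ L), Finset.card_univ, Fintype.card_fin]
  have hLval : (L : ℕ) = n - 1 := rfl
  constructor
  · have key := Finset.card_le_card_of_injOn
      (f := fun x : Fin n × Fin n × Fin n => ({x.1, x.2.1, x.2.2} : Finset (Fin n)))
      (s := Finset.univ.filter (fun x : Fin n × Fin n × Fin n =>
        x.1 < x.2.1 ∧ x.2.1 < x.2.2 ∧ b x.2.1 < b x.1 ∧ b x.2.1 < b x.2.2))
      (t := (Finset.univ.erase L).powersetCard 3)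
      (by
        rintro ⟨i, j, k⟩ hx
        simp only [Finset.mem_coe, Finset.mem_filter, Finset.mem_univ, true_and] at hx
        obtain ⟨h1, h2, h3, h4⟩ := hx
        have g1 : (i : ℕ) < j := h1
        have g2 : (j : ℕ) < k := h2
        have hkL : k ≠ L := by
          intro h
          have hjL : j ≠ L := by
            intro h'
            have e1 : (j : ℕ) = n - 1 := congrArg Fin.val h'
            have e2 : (k : ℕ) = n - 1 := congrArg Fin.val h
            omega
          have hm := hmin j hjL
          rw [h] at h4
          omega
        have hkn : (k : ℕ) < n - 1 := by
          have hk1 := k.is_lt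
          have hk2 : (k : ℕ) ≠ n - 1 := fun h => hkL (Fin.ext h)
          omega
        have hjL : j ≠ L := fun h => by
          have : (j : ℕ) = n - 1 := congrArg Fin.val h; omega
        have hiL : i ≠ L := fun h => by
          have : (i : ℕ) = n - 1 := congrArg Fin.val h; omega
        simp only [Finset.mem_coe, Finset.mem_powersetCard]
        constructor
        · intro a ha
          simp only [Finset.mem_insert, Finset.mem_singleton] at ha
          rcases ha with rfl | rfl | rfl <;>
            simp [Finset.mem_erase, hiL, hjL, hkL]
        · rw [Finset.card_insert_of_notMem, Finset.card_insert_of_notMem,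
            Finset.card_singleton]
          · simp only [Finset.mem_singleton, Fin.ext_iff]; omega
          · simp only [Finset.mem_insert, Finset.mem_singleton, Fin.ext_iff]
            push_neg; omega)
      (by
        rintro ⟨i, j, k⟩ hx ⟨i', j', k'⟩ hy h
        simp only [Finset.mem_coe, Finset.mem_filter, Finset.mem_univ, true_and] at hx hy
        obtain ⟨h1, h2, -⟩ := hx
        obtain ⟨h1', h2', -⟩ := hy
        have h' : ({i, j, k} : Finset (Fin n)) = {i', j', k'} := h
        have e1 : i ∈ ({i', j', k'} : Finset (Fin n)) := h' ▸ (by simp)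
        have e2 : j ∈ ({i', j', k'} : Finset (Fin n)) := h' ▸ (by simp)
        have e3 : k ∈ ({i', j', k'} : Finset (Fin n)) := h' ▸ (by simp)
        have e1' : i' ∈ ({i, j, k} : Finset (Fin n)) := h'.symm ▸ (by simp)
        have e2' : j' ∈ ({i, j, k} : Finset (Fin n)) := h'.symm ▸ (by simp)
        have e3' : k' ∈ ({i, j, k} : Finset (Fin n)) := h'.symm ▸ (by simp)
        simp only [Finset.mem_insert, Finset.mem_singleton, Fin.ext_iff] at e1 e2 e3 e1' e2' e3'
        have g1 : (i : ℕ) < j := h1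
        have g2 : (j : ℕ) < k := h2
        have g1' : (i' : ℕ) < j' := h1'
        have g2' : (j' : ℕ) < k' := h2'
        have heq : (i : ℕ) = i' ∧ (j : ℕ) = j' ∧ (k : ℕ) = k' := by omega
        obtain ⟨a1, a2, a3⟩ := heq
        exact Prod.ext (Fin.ext a1) (Prod.ext (Fin.ext a2) (Fin.ext a3)))
    calc _ ≤ ((Finset.univ.erase L).powersetCard 3).card := key
      _ = (n - 1).choose 3 := by rw [Finset.card_powersetCard, hcard]
  · have key := Finset.card_le_card_of_injOn
      (f := fun x : Fin n × Fin n × Fin n × Fin n =>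
        ({x.1, x.2.1, x.2.2.1, x.2.2.2} : Finset (Fin n)))
      (s := Finset.univ.filter (fun x : Fin n × Fin n × Fin n × Fin n =>
        x.1 < x.2.1 ∧ x.2.1 < x.2.2.1 ∧ x.2.2.1 < x.2.2.2 ∧
          b x.2.2.1 < b x.1 ∧ b x.2.1 < b x.2.2.2))
      (t := (Finset.univ.erase L).powersetCard 4)
      (by
        rintro ⟨i, j, k, l⟩ hx
        simp only [Finset.mem_coe, Finset.mem_filter, Finset.mem_univ, true_and] at hx
        obtain ⟨h1, h2, h3, h4, h5⟩ := hx
        have g1 : (i : ℕ) < j := h1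
        have g2 : (j : ℕ) < k := h2
        have g3 : (k : ℕ) < l := h3
        have hlL : l ≠ L := by
          intro h
          have hjL : j ≠ L := by
            intro h'
            have e1 : (j : ℕ) = n - 1 := congrArg Fin.val h'
            have e2 : (l : ℕ) = n - 1 := congrArg Fin.val h
            omega
          have hm := hmin j hjL
          rw [h] at h5
          omega
        have hln : (l : ℕ) < n - 1 := by
          have hl1 := l.is_lt
          have hl2 : (l : ℕ) ≠ n - 1 := fun h => hlL (Fin.ext h)
          omega
        have hkL : k ≠ L := fun h => by
          have : (k : ℕ) = n - 1 := congrArg Fin.val h; omega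
        have hjL : j ≠ L := fun h => by
          have : (j : ℕ) = n - 1 := congrArg Fin.val h; omega
        have hiL : i ≠ L := fun h => by
          have : (i : ℕ) = n - 1 := congrArg Fin.val h; omega
        simp only [Finset.mem_coe, Finset.mem_powersetCard]
        constructor
        · intro a ha
          simp only [Finset.mem_insert, Finset.mem_singleton] at ha
          rcases ha with rfl | rfl | rfl | rfl <;>
            simp [Finset.mem_erase, hiL, hjL, hkL, hlL]
        · rw [Finset.card_insert_of_notMem, Finset.card_insert_of_notMem,
            Finset.card_insert_of_notMem, Finset.card_singleton]
          · simp only [Finset.mem_singleton, Fin.ext_iff]; omega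
          · simp only [Finset.mem_insert, Finset.mem_singleton, Fin.ext_iff]
            push_neg; omega
          · simp only [Finset.mem_insert, Finset.mem_singleton, Fin.ext_iff]
            push_neg
            refine ⟨?_, ?_, ?_⟩ <;> omega)
      (by
        rintro ⟨i, j, k, l⟩ hx ⟨i', j', k', l'⟩ hy h
        simp only [Finset.mem_coe, Finset.mem_filter, Finset.mem_univ, true_and] at hx hy
        obtain ⟨h1, h2, h3, -⟩ := hx
        obtain ⟨h1', h2', h3', -⟩ := hy
        have h' : ({i, j, k, l} : Finset (Fin n)) = {i', j', k', l'} := h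
        have e1 : i ∈ ({i', j', k', l'} : Finset (Fin n)) := h' ▸ (by simp)
        have e2 : j ∈ ({i', j', k', l'} : Finset (Fin n)) := h' ▸ (by simp)
        have e3 : k ∈ ({i', j', k', l'} : Finset (Fin n)) := h' ▸ (by simp)
        have e4 : l ∈ ({i', j', k', l'} : Finset (Fin n)) := h' ▸ (by simp)
        have e1' : i' ∈ ({i, j, k, l} : Finset (Fin n)) := h'.symm ▸ (by simp)
        have e2' : j' ∈ ({i, j, k, l} : Finset (Fin n)) := h'.symm ▸ (by simp)
        have e3' : k' ∈ ({i, j, k, l} : Finset (Fin n)) := h'.symm ▸ (by simp)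
        have e4' : l' ∈ ({i, j, k, l} : Finset (Fin n)) := h'.symm ▸ (by simp)
        simp only [Finset.mem_insert, Finset.mem_singleton, Fin.ext_iff]
          at e1 e2 e3 e4 e1' e2' e3' e4'
        have g1 : (i : ℕ) < j := h1
        have g2 : (j : ℕ) < k := h2
        have g3 : (k : ℕ) < l := h3
        have g1' : (i' : ℕ) < j' := h1'
        have g2' : (j' : ℕ) < k' := h2'
        have g3' : (k' : ℕ) < l' := h3'
        have heq : (i : ℕ) = i' ∧ (j : ℕ) = j' ∧ (k : ℕ) = k' ∧ (l : ℕ) = l' := by omega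
        obtain ⟨a1, a2, a3, a4⟩ := heq
        exact Prod.ext (Fin.ext a1) (Prod.ext (Fin.ext a2)
          (Prod.ext (Fin.ext a3) (Fin.ext a4))))
    calc _ ≤ ((Finset.univ.erase L).powersetCard 4).card := key
      _ = (n - 1).choose 4 := by rw [Finset.card_powersetCard, hcard]
end

section
/- Fix n ≥ 2 and a bijection a : Fin n → Fin n with a 0 = 0 (the pedal permutation, recording the level of each strand of an n-petal übercrossing projection in the order traversed, smaller value meaning higher strand). Let π : Fin n → Fin n be given by π i = i + 1 for i < n − 1 and π (n−1) = 0, and set d i := a (π i) (the levels in Gauss-diagram order, so d (n−1) = 0 is minimal). For pedal positions p < q define the crossing sign s(p, q) := (−1)^(q−p+1) if a p < a q and s(p, q) := (−1)^(q−p) otherwise, and for diagram positions i ≠ j set S(i, j) := s(min(π i, π j), max(π i, π j)). Define the Casson count C(a) as the sum, over all triples i < j < k in Fin n with d j < d i and d j < d k, of the contribution t(i,j,k) := 1 if S(i,j) = S(i,k) = S(j,k); t(i,j,k) := −1 if d k < d i and S(i,j) = S(i,k) and S(i,k) = −S(j,k); t(i,j,k) := −1 if d i < d k and S(j,k) = S(i,k)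 and S(i,k) = −S(i,j); t(i,j,k) := 0 otherwise; plus the sum, over all quadruples i < j < k < l in Fin n with d k < d i and d j < d l, of S(i,k) · S(j,l). Then |C(a)| ≤ binomial(n−1, 3) + binomial(n−1, 4). -/
private lemma casson_triple_bound (n : ℕ) (hn : 2 ≤ n)
    (d : Fin n → Fin n) (hdlast : d ⟨n - 1, Nat.sub_lt (Nat.lt_of_lt_of_le (by decide) hn) Nat.one_pos⟩ = ⟨0, Nat.lt_of_lt_of_le (by decide) hn⟩)
    (t : Fin n → Fin n → Fin n → ℤ) (htabs : ∀ i j k : Fin n, |t i j k| ≤ 1)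
    (F : Finset (Fin n × Fin n × Fin n))
    (hF : ∀ x ∈ F, x.1 < x.2.1 ∧ x.2.1 < x.2.2 ∧ d x.2.1 < d x.2.2) :
    |∑ x ∈ F, t x.1 x.2.1 x.2.2| ≤ ((n - 1).choose 3 : ℤ) := by
  have hcard : F.card ≤ (n - 1).choose 3 := by
    have key : F.card ≤ (((Finset.univ : Finset (Fin n)).erase ⟨n - 1, by omega⟩).powersetCard 3).card := by
      apply Finset.card_le_card_of_injOn (fun x => {x.1, x.2.1, x.2.2})
      · intro x hx
        obtain ⟨h12, h23, hd2⟩ := hF x hx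
        have hk : (x.2.2 : ℕ) < n - 1 := by
          by_contra hk
          have hx22 : x.2.2 = ⟨n - 1, by omega⟩ := by
            apply Fin.ext
            simp only [Fin.val_mk]
            have := x.2.2.isLt
            omega
          rw [hx22, hdlast] at hd2
          have := Fin.lt_def.mp hd2
          simp only [Fin.val_mk] at this
          omega
        have h12' := Fin.lt_def.mp h12
        have h23' := Fin.lt_def.mp h23
        simp only [Finset.mem_coe]
        rw [Finset.mem_powersetCard]
        constructor
        · intro y hy
          simp only [Finset.mem_insert, Finset.mem_singleton] at hy
          rw [Finset.mem_erase]
          refine ⟨?_, Finset.mem_univ _⟩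
          rcases hy with rfl | rfl | rfl <;>
            · intro h
              have := congrArg Fin.val h
              simp only [Fin.val_mk] at this
              omega
        · rw [Finset.card_insert_of_notMem, Finset.card_insert_of_notMem,
            Finset.card_singleton]
          · simp only [Finset.mem_singleton]
            intro h; have := congrArg Fin.val h; omega
          · simp only [Finset.mem_insert, Finset.mem_singleton]
            rintro (h | h) <;> (have := congrArg Fin.val h; omega)
      · intro x hx y hy hxy
        obtain ⟨hx12, hx23, -⟩ := hF x hx
        obtain ⟨hy12, hy23, -⟩ := hF y hy
        have h := Finset.ext_iff.mp hxy
        have h1 := (h x.1).mp (by simp)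
        have h2 := (h x.2.1).mp (by simp)
        have h3 := (h x.2.2).mp (by simp)
        have h4 := (h y.1).mpr (by simp)
        have h5 := (h y.2.1).mpr (by simp)
        have h6 := (h y.2.2).mpr (by simp)
        simp only [Finset.mem_insert, Finset.mem_singleton, Fin.ext_iff] at h1 h2 h3 h4 h5 h6
        have hx12' := Fin.lt_def.mp hx12
        have hx23' := Fin.lt_def.mp hx23
        have hy12' := Fin.lt_def.mp hy12
        have hy23' := Fin.lt_def.mp hy23
        have e1 : x.1 = y.1 := Fin.ext (by omega)
        have e2 : x.2.1 = y.2.1 := Fin.ext (by omega)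
        have e3 : x.2.2 = y.2.2 := Fin.ext (by omega)
        exact Prod.ext e1 (Prod.ext e2 e3)
    rwa [Finset.card_powersetCard, Finset.card_erase_of_mem (Finset.mem_univ _),
      Finset.card_univ, Fintype.card_fin] at key
  calc |∑ x ∈ F, t x.1 x.2.1 x.2.2| ≤ ∑ x ∈ F, |t x.1 x.2.1 x.2.2| :=
        Finset.abs_sum_le_sum_abs _ _
    _ ≤ F.card • (1 : ℤ) := Finset.sum_le_card_nsmul _ _ _ (fun x _ => htabs _ _ _)
    _ = (F.card : ℤ) := by simp
    _ ≤ ((n - 1).choose 3 : ℤ) := by exact_mod_cast hcard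

private lemma casson_quad_bound (n : ℕ) (hn : 2 ≤ n)
    (d : Fin n → Fin n) (hdlast : d ⟨n - 1, Nat.sub_lt (Nat.lt_of_lt_of_le (by decide) hn) Nat.one_pos⟩ = ⟨0, Nat.lt_of_lt_of_le (by decide) hn⟩)
    (S : Fin n → Fin n → ℤ) (hSabs : ∀ i j : Fin n, i ≠ j → |S i j| = 1)
    (F : Finset (Fin n × Fin n × Fin n × Fin n))
    (hF : ∀ x ∈ F, x.1 < x.2.1 ∧ x.2.1 < x.2.2.1 ∧ x.2.2.1 < x.2.2.2 ∧ d x.2.1 < d x.2.2.2) :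
    |∑ x ∈ F, S x.1 x.2.2.1 * S x.2.1 x.2.2.2| ≤ ((n - 1).choose 4 : ℤ) := by
  have hcard : F.card ≤ (n - 1).choose 4 := by
    have key : F.card ≤ (((Finset.univ : Finset (Fin n)).erase ⟨n - 1, by omega⟩).powersetCard 4).card := by
      apply Finset.card_le_card_of_injOn (fun x => {x.1, x.2.1, x.2.2.1, x.2.2.2})
      · intro x hx
        obtain ⟨h12, h23, h34, hd2⟩ := hF x hx
        have hk : (x.2.2.2 : ℕ) < n - 1 := by
          by_contra hk
          have hx22 : x.2.2.2 = ⟨n - 1, by omega⟩ := by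
            apply Fin.ext
            simp only [Fin.val_mk]
            have := x.2.2.2.isLt
            omega
          rw [hx22, hdlast] at hd2
          have := Fin.lt_def.mp hd2
          simp only [Fin.val_mk] at this
          omega
        have h12' := Fin.lt_def.mp h12
        have h23' := Fin.lt_def.mp h23
        have h34' := Fin.lt_def.mp h34
        simp only [Finset.mem_coe]
        rw [Finset.mem_powersetCard]
        constructor
        · intro y hy
          simp only [Finset.mem_insert, Finset.mem_singleton] at hy
          rw [Finset.mem_erase]
          refine ⟨?_, Finset.mem_univ _⟩
          rcases hy with rfl | rfl | rfl | rfl <;>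
            · intro h
              have := congrArg Fin.val h
              simp only [Fin.val_mk] at this
              omega
        · rw [Finset.card_insert_of_notMem, Finset.card_insert_of_notMem,
            Finset.card_insert_of_notMem, Finset.card_singleton]
          · simp only [Finset.mem_singleton]
            intro h; have := congrArg Fin.val h; omega
          · simp only [Finset.mem_insert, Finset.mem_singleton]
            rintro (h | h) <;> (have := congrArg Fin.val h; omega)
          · simp only [Finset.mem_insert, Finset.mem_singleton]
            rintro (h | h | h) <;> (have := congrArg Fin.val h; omega)
      · intro x hx y hy hxy
        obtain ⟨hx12, hx23, hx34, -⟩ := hF x hx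
        obtain ⟨hy12, hy23, hy34, -⟩ := hF y hy
        have h := Finset.ext_iff.mp hxy
        have h1 := (h x.1).mp (by simp)
        have h2 := (h x.2.1).mp (by simp)
        have h3 := (h x.2.2.1).mp (by simp)
        have h3' := (h x.2.2.2).mp (by simp)
        have h4 := (h y.1).mpr (by simp)
        have h5 := (h y.2.1).mpr (by simp)
        have h6 := (h y.2.2.1).mpr (by simp)
        have h6' := (h y.2.2.2).mpr (by simp)
        simp only [Finset.mem_insert, Finset.mem_singleton, Fin.ext_iff] at h1 h2 h3 h3' h4 h5 h6 h6'
        have hx12' := Fin.lt_def.mp hx12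
        have hx23' := Fin.lt_def.mp hx23
        have hx34' := Fin.lt_def.mp hx34
        have hy12' := Fin.lt_def.mp hy12
        have hy23' := Fin.lt_def.mp hy23
        have hy34' := Fin.lt_def.mp hy34
        have e1 : x.1 = y.1 := Fin.ext (by omega)
        have e2 : x.2.1 = y.2.1 := Fin.ext (by omega)
        have e3 : x.2.2.1 = y.2.2.1 := Fin.ext (by omega)
        have e4 : x.2.2.2 = y.2.2.2 := Fin.ext (by omega)
        exact Prod.ext e1 (Prod.ext e2 (Prod.ext e3 e4))
    rwa [Finset.card_powersetCard, Finset.card_erase_of_mem (Finset.mem_univ _),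
      Finset.card_univ, Fintype.card_fin] at key
  calc |∑ x ∈ F, S x.1 x.2.2.1 * S x.2.1 x.2.2.2|
      ≤ ∑ x ∈ F, |S x.1 x.2.2.1 * S x.2.1 x.2.2.2| := Finset.abs_sum_le_sum_abs _ _
    _ ≤ F.card • (1 : ℤ) := by
        apply Finset.sum_le_card_nsmul
        intro x hx
        obtain ⟨h12, h23, h34, -⟩ := hF x hx
        rw [abs_mul, hSabs _ _ (ne_of_lt (h12.trans h23)),
          hSabs _ _ (ne_of_lt (h23.trans h34))]
        norm_num
    _ = (F.card : ℤ) := by simp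
    _ ≤ ((n - 1).choose 4 : ℤ) := by exact_mod_cast hcard



/-- The combinatorial form of the übercrossing bound
`|c₂(K)| ≤ C(ü(K)-1, 3) + C(ü(K)-1, 4)`: the Casson count `C` computed from the
pedal permutation `a` of an `n`-petal übercrossing projection satisfies
`|C| ≤ (n-1).choose 3 + (n-1).choose 4`. -/
theorem pedal_casson_count_bound (n : ℕ) (hn : 2 ≤ n)
    (a : Fin n → Fin n) (ha : Function.Bijective a)
    (ha0 : a ⟨0, by omega⟩ = ⟨0, by omega⟩)
    -- the cyclic reindexing from pedal positions to Gauss-diagram positions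
    (π : Fin n → Fin n)
    (hπ : ∀ (i : Fin n) (_hi : (i : ℕ) < n - 1), π i = ⟨(i : ℕ) + 1, by omega⟩)
    (hπlast : π ⟨n - 1, by omega⟩ = ⟨0, by omega⟩)
    -- the levels in Gauss-diagram order
    (d : Fin n → Fin n) (hd : ∀ i : Fin n, d i = a (π i))
    -- crossing signs in pedal positions
    (s : Fin n → Fin n → ℤ)
    (hs : ∀ p q : Fin n, p < q →
      s p q = if a p < a q then (-1 : ℤ) ^ ((q : ℕ) - (p : ℕ) + 1)
              else (-1 : ℤ) ^ ((q : ℕ) - (p : ℕ)))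
    -- crossing signs in diagram positions
    (S : Fin n → Fin n → ℤ)
    (hS : ∀ i j : Fin n, i ≠ j → S i j = s (min (π i) (π j)) (max (π i) (π j)))
    -- the contribution of an eligible triple
    (t : Fin n → Fin n → Fin n → ℤ)
    (ht : ∀ i j k : Fin n,
      t i j k =
        if S i j = S i k ∧ S i k = S j k then 1
        else if d k < d i ∧ S i j = S i k ∧ S i k = -S j k then -1
        else if d i < d k ∧ S j k = S i k ∧ S i k = -S i j then -1
        else 0)
    -- the Casson count
    (C : ℤ)
    (hC : C =
      (∑ x ∈ Finset.univ.filter (fun x : Fin n × Fin n × Fin n =>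
          x.1 < x.2.1 ∧ x.2.1 < x.2.2 ∧ d x.2.1 < d x.1 ∧ d x.2.1 < d x.2.2),
        t x.1 x.2.1 x.2.2) +
      (∑ x ∈ Finset.univ.filter (fun x : Fin n × Fin n × Fin n × Fin n =>
          x.1 < x.2.1 ∧ x.2.1 < x.2.2.1 ∧ x.2.2.1 < x.2.2.2 ∧
            d x.2.2.1 < d x.1 ∧ d x.2.1 < d x.2.2.2),
        S x.1 x.2.2.1 * S x.2.1 x.2.2.2)) :
    |C| ≤ ((n - 1).choose 3 : ℤ) + ((n - 1).choose 4 : ℤ) := by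
  have hn0 : 0 < n := by omega
  have hπval : ∀ i : Fin n, (π i : ℕ) = if (i : ℕ) < n - 1 then (i : ℕ) + 1 else 0 := by
    intro i
    by_cases h : (i : ℕ) < n - 1
    · rw [hπ i h]; simp [h]
    · have hi : i = ⟨n - 1, by omega⟩ := by
        apply Fin.ext
        simp only [Fin.val_mk]
        have := i.isLt
        omega
      rw [hi, hπlast]; simp [h]
  have hπinj : Function.Injective π := by
    intro i j h
    have h' := congrArg Fin.val h
    rw [hπval, hπval] at h'
    apply Fin.ext
    split_ifs at h' <;> omega
  have hSabs : ∀ i j : Fin n, i ≠ j → |S i j| = 1 := by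
    intro i j hij
    have hne : π i ≠ π j := fun h => hij (hπinj h)
    have hlt : min (π i) (π j) < max (π i) (π j) := min_lt_max.mpr hne
    rw [hS i j hij, hs _ _ hlt]
    split_ifs <;> simp [abs_pow]
  have htabs : ∀ i j k : Fin n, |t i j k| ≤ 1 := by
    intro i j k
    rw [ht]
    split_ifs <;> norm_num
  have hdlast : d ⟨n - 1, by omega⟩ = ⟨0, by omega⟩ := by
    rw [hd, hπlast, ha0]
  rw [hC]
  refine le_trans (abs_add_le _ _) (add_le_add
    (casson_triple_bound n hn d hdlast t htabs _ ?_)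
    (casson_quad_bound n hn d hdlast S hSabs _ ?_))
  · intro x hx
    simp only [Finset.mem_filter] at hx
    exact ⟨hx.2.1, hx.2.2.1, hx.2.2.2.2⟩
  · intro x hx
    simp only [Finset.mem_filter] at hx
    exact ⟨hx.2.1, hx.2.2.1, hx.2.2.2.1, hx.2.2.2.2.2⟩
end
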